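/- In a finite n-person game with n ≥ 4 where each player has at least two actions, every action profile ā can be supported as the unique fixed point of some conditional strategy profile s with the property that no single player can unilaterally deviate to create a profile admitting a fixed point different from ā; consequently ā is the outcome of a conditional strategy equilibrium. -/

import Mathlib

namespace CondStrat

open Function
open scoped Classical

/-- A fixed point of a pure conditional strategy profile. -/
def FixPt {N : Type*} {A : N → Type*}
    (s : ∀ i, (∀ j, j ≠ i → A j) → A i) (a : ∀ i, A i) : Prop :=
  ∀ i, s i (fun j _ => a j) = a i

/-- `a` is a distinguished fixed point of `s`: a fixed point whose payoffs weakly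
Pareto dominate those of every fixed point of `s`.  A profile `s` is an
*agreement* iff it admits such a fixed point. -/
def BestFixPt {N : Type*} {A : N → Type*} (u : N → (∀ i, A i) → ℝ)
    (s : ∀ i, (∀ j, j ≠ i → A j) → A i) (a : ∀ i, A i) : Prop :=
  FixPt s a ∧ ∀ a', FixPt s a' → ∀ i, u i a' ≤ u i a

/-- The payoff of player `i` in the conditional extension: the payoff at the
distinguished fixed point if `s` is an agreement, and `0` otherwise.  (Any two
distinguished fixed points yield the same payoffs, so this is well defined.) -/
noncomputable def U {N : Type*} {A : N → Type*} (u : N → (∀ i, A i) → ℝ)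
    (s : ∀ i, (∀ j, j ≠ i → A j) → A i) (i : N) : ℝ :=
  if h : ∃ a, BestFixPt u s a then u i h.choose else 0

/-- Conditional strategy equilibrium: no unilaterally profitable deviation. -/
def CSE {N : Type*} {A : N → Type*} [DecidableEq N] (u : N → (∀ i, A i) → ℝ)
    (s : ∀ i, (∀ j, j ≠ i → A j) → A i) : Prop :=
  ∀ (i : N) (s' : (∀ j, j ≠ i → A j) → A i), U u (Function.update s i s') i ≤ U u s i

/-- Strong conditional equilibrium: no nonempty coalition has a joint deviation
making all of its members strictly better off. -/
def StrongCE {N : Type*} {A : N → Type*} [DecidableEq N] (u : N → (∀ i, A i) → ℝ)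
    (s : ∀ i, (∀ j, j ≠ i → A j) → A i) : Prop :=
  ¬ ∃ (C : Finset N) (s' : ∀ i, (∀ j, j ≠ i → A j) → A i),
      C.Nonempty ∧ (∀ j ∉ C, s' j = s j) ∧ ∀ i ∈ C, U u s i < U u s' i




def Wmem {N : Type*} (σ : N → N) (S : Set N) (j : N) : Prop :=
  (∃ t, S = {t} ∧ j = σ t) ∨ (∃ t, S = ({t, σ t} : Set N) ∧ j = σ (σ t))

theorem wmem_empty {N : Type*} (σ : N → N) (j : N) : ¬ Wmem σ ∅ j := by
  rintro (⟨t, ht, -⟩ | ⟨t, ht, -⟩)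
  · exact Set.singleton_ne_empty t ht.symm
  · have : t ∈ (∅ : Set N) := by rw [ht]; exact Set.mem_insert _ _
    exact this

theorem witnesses {N : Type*} {σ : N → N} (hinj : Function.Injective σ)
    (h1 : ∀ c, σ c ≠ c) (h2 : ∀ c, σ (σ c) ≠ c) (h3 : ∀ c, σ (σ (σ c)) ≠ c)
    (d : Set N) (hd : d.Nonempty) :
    ∃ j1 j2 : N, j1 ≠ j2 ∧
      ((j1 ∈ d ∧ ¬ Wmem σ (d \ {j1}) j1) ∨ (j1 ∉ d ∧ Wmem σ d j1)) ∧
      ((j2 ∈ d ∧ ¬ Wmem σ (d \ {j2}) j2) ∨ (j2 ∉ d ∧ Wmem σ d j2)) := by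
  obtain ⟨t, ht⟩ := hd
  by_cases hs : ∀ y ∈ d, y = t
  · -- d = {t}
    have hdt : d = {t} := Set.eq_singleton_iff_unique_mem.mpr ⟨ht, hs⟩
    refine ⟨t, σ t, fun h => h1 t h.symm, Or.inl ⟨ht, ?_⟩, Or.inr ⟨?_, Or.inl ⟨t, hdt, rfl⟩⟩⟩
    · rw [hdt]
      simpa using wmem_empty σ t
    · rw [hdt]
      intro h
      exact h1 t (Set.mem_singleton_iff.mp h)
  · push_neg at hs
    obtain ⟨y, hy, hyt⟩ := hs
    by_cases hx : ∃ x ∈ d, Wmem σ (d \ {x}) x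
    · obtain ⟨x, hxd, hw⟩ := hx
      rcases hw with ⟨c, hset, rfl⟩ | ⟨c, hset, rfl⟩
      · -- d \ {σ c} = {c}, so d = {c, σ c}
        have hcd : c ∈ d := by
          have : c ∈ d \ {σ c} := by rw [hset]; rfl
          exact this.1
        have hd2 : d = {c, σ c} := by
          ext z
          constructor
          · intro hz
            by_cases hzx : z = σ c
            · right; exact hzx
            · left
              have : z ∈ d \ {σ c} := ⟨hz, hzx⟩
              rw [hset] at this
              exact this
          · rintro (rfl | rfl)
            · exact hcd
            · exact hxd
        have hdc : d \ {c} = {σ c} := by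
          rw [hd2]
          ext z
          simp only [Set.mem_diff, Set.mem_insert_iff, Set.mem_singleton_iff]
          constructor
          · rintro ⟨hz1 | hz1, hz⟩
            · exact absurd hz1 hz
            · exact hz1
          · rintro rfl
            exact ⟨Or.inr rfl, fun h => h1 c h⟩
        refine ⟨c, σ (σ c), fun h => h2 c h.symm, Or.inl ⟨hcd, ?_⟩, Or.inr ⟨?_, Or.inr ⟨c, hd2, rfl⟩⟩⟩
        · rw [hdc]
          rintro (⟨t', ht', hc⟩ | ⟨t', ht', hc⟩)
          · have h1' : t' = σ c := Set.singleton_eq_singleton_iff.mp ht'.symm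
            rw [h1'] at hc
            exact h2 c hc.symm
          · have h1' : t' = σ c := by
              have h := Set.mem_insert t' ({σ t'} : Set N)
              rw [← ht'] at h
              exact h
            have h2' : σ t' = σ c := by
              have h := Set.mem_insert_of_mem (s := ({σ t'} : Set N)) t' rfl
              rw [← ht'] at h
              exact h
            rw [← h1'] at h2'
            exact h1 t' h2'
        · rw [hd2]
          rintro (h | h)
          · exact h2 c h
          · exact h1 c (hinj h)
      · -- d \ {σ (σ c)} = {c, σ c}, so d = {c, σ c, σ (σ c)}
        have hcd : c ∈ d := by
          have : c ∈ d \ {σ (σ c)} := by rw [hset]; exact Set.mem_insert _ _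
          exact this.1
        have hscd : σ c ∈ d := by
          have : σ c ∈ d \ {σ (σ c)} := by rw [hset]; exact Set.mem_insert_of_mem c rfl
          exact this.1
        have hd3 : d = {c, σ c, σ (σ c)} := by
          ext z
          constructor
          · intro hz
            by_cases hzx : z = σ (σ c)
            · right; right; exact hzx
            · have : z ∈ d \ {σ (σ c)} := ⟨hz, hzx⟩
              rw [hset] at this
              rcases this with hz1 | hz1
              · left; exact hz1
              · right; left; exact hz1
          · rintro (rfl | rfl | rfl)
            · exact hcd
            · exact hscd
            · exact hxd
        refine ⟨c, σ c, fun h => h1 c h.symm, Or.inl ⟨hcd, ?_⟩, Or.inl ⟨hscd, ?_⟩⟩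
        · have hdc : d \ {c} = {σ c, σ (σ c)} := by
            rw [hd3]
            ext z
            simp only [Set.mem_diff, Set.mem_insert_iff, Set.mem_singleton_iff]
            constructor
            · rintro ⟨hz1 | hz1 | hz1, hz⟩
              · exact absurd hz1 hz
              · exact Or.inl hz1
              · exact Or.inr hz1
            · rintro (rfl | rfl)
              · exact ⟨Or.inr (Or.inl rfl), fun h => h1 c h⟩
              · exact ⟨Or.inr (Or.inr rfl), fun h => h2 c h⟩
          rw [hdc]
          rintro (⟨t', ht', hc⟩ | ⟨t', ht', hc⟩)
          · have ha : σ c = t' := by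
              have : σ c ∈ ({t'} : Set N) := by rw [← ht']; exact Set.mem_insert _ _
              exact this
            have hb : σ (σ c) = t' := by
              have : σ (σ c) ∈ ({t'} : Set N) := by
                rw [← ht']; exact Set.mem_insert_of_mem _ rfl
              exact this
            rw [← ha] at hb
            exact h1 c (hinj hb)
          · -- {σ c, σ (σ c)} = {t', σ t'}, c = σ (σ t')
            have ht'mem : t' ∈ ({σ c, σ (σ c)} : Set N) := by
              rw [ht']; exact Set.mem_insert _ _
            rcases ht'mem with ha | ha
            · rw [ha] at hc
              exact h3 c hc.symm
            · have hst' : σ t' ∈ ({σ c, σ (σ c)} : Set N) := by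
                rw [ht']; exact Set.mem_insert_of_mem _ rfl
              rcases hst' with h | h
              · rw [ha] at h
                exact h2 c (hinj h)
              · rw [ha] at h
                exact h1 (σ (σ c)) h
        · have hdc : d \ {σ c} = {c, σ (σ c)} := by
            rw [hd3]
            ext z
            simp only [Set.mem_diff, Set.mem_insert_iff, Set.mem_singleton_iff]
            constructor
            · rintro ⟨hz1 | hz1 | hz1, hz⟩
              · exact Or.inl hz1
              · exact absurd hz1 hz
              · exact Or.inr hz1
            · rintro (rfl | rfl)
              · exact ⟨Or.inl rfl, fun h => h1 z h.symm⟩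
              · exact ⟨Or.inr (Or.inr rfl), fun h => h1 c (hinj h)⟩
          rw [hdc]
          rintro (⟨t', ht', hc⟩ | ⟨t', ht', hc⟩)
          · have ha : c = t' := by
              have : c ∈ ({t'} : Set N) := by rw [← ht']; exact Set.mem_insert _ _
              exact this
            have hb : σ (σ c) = t' := by
              have : σ (σ c) ∈ ({t'} : Set N) := by
                rw [← ht']; exact Set.mem_insert_of_mem _ rfl
              exact this
            rw [← ha] at hb
            exact h2 c hb
          · have hct : c = σ t' := hinj hc
            have ht'mem : t' ∈ ({c, σ (σ c)} : Set N) := by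
              rw [ht']; exact Set.mem_insert _ _
            rcases ht'mem with ha | ha
            · rw [ha] at hct
              exact h1 c hct.symm
            · rw [ha] at hct
              exact h3 c hct.symm
    · -- no insider matches; d has two distinct elements
      push_neg at hx
      exact ⟨t, y, fun h => hyt h.symm, Or.inl ⟨ht, hx t ht⟩, Or.inl ⟨hy, hx y hy⟩⟩

open Fin.NatCast in
theorem exists_sigma {N : Type*} [Fintype N] (hN : 4 ≤ Fintype.card N) :
    ∃ σ : N → N, Function.Injective σ ∧ (∀ c, σ c ≠ c) ∧ (∀ c, σ (σ c) ≠ c) ∧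
      (∀ c, σ (σ (σ c)) ≠ c) := by
  classical
  haveI : NeZero (Fintype.card N) := ⟨by omega⟩
  set n := Fintype.card N with hn
  let e := Fintype.equivFin N
  have hval : ∀ k : ℕ, 0 < k → k < n → ((k : Fin n) : ℕ) = k := by
    intro k hk hkn
    simp [Fin.val_natCast, Nat.mod_eq_of_lt hkn]
  have hne : ∀ k : ℕ, 0 < k → k < n → (k : Fin n) ≠ 0 := by
    intro k hk hkn h
    have := hval k hk hkn
    rw [h] at this
    simp at this
    omega
  have key : ∀ (x : N) (k : ℕ), 0 < k → k < n → e.symm (e x + (k : Fin n)) ≠ x := by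
    intro x k hk hkn h
    apply hne k hk hkn
    have : e x + (k : Fin n) = e x := by
      conv_rhs => rw [← h]
      simp
    exact add_eq_left.mp this
  refine ⟨fun x => e.symm (e x + 1), ?_, ?_, ?_, ?_⟩
  · intro a c h
    have := e.symm.injective h
    have := add_right_cancel this
    exact e.injective this
  · intro c
    have := key c 1 (by omega) (by omega)
    simpa using this
  · intro c
    have := key c 2 (by omega) (by omega)
    have h2 : ((2:ℕ) : Fin n) = 1 + 1 := by rw [show (2:ℕ) = 1 + 1 from rfl, Nat.cast_add, Nat.cast_one]
    rw [h2] at this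
    simpa [Equiv.apply_symm_apply, add_assoc] using this
  · intro c
    have := key c 3 (by omega) (by omega)
    have h3 : ((3:ℕ) : Fin n) = 1 + 1 + 1 := by rw [show (3:ℕ) = 1 + 1 + 1 from rfl, Nat.cast_add, Nat.cast_add, Nat.cast_one]
    rw [h3] at this
    simpa [Equiv.apply_symm_apply, add_assoc] using this


/-- in a finite game with at least four players, each having at
least two actions, every action profile `ā` is the unique fixed point of some
conditional strategy profile from which no unilateral deviation can create a
fixed point different from `ā`; consequently `ā` is the outcome of a conditional
strategy equilibrium. -/
theorem every_profile_supported {N : Type*} {A : N → Type*}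
    [Fintype N] [DecidableEq N] [∀ i, Fintype (A i)]
    (hN : 4 ≤ Fintype.card N) (hA : ∀ i, 1 < Fintype.card (A i))
    (u : N → (∀ i, A i) → ℝ) (hu : ∀ i a, 0 ≤ u i a)
    (abar : ∀ i, A i) :
    ∃ s : ∀ i, (∀ j, j ≠ i → A j) → A i,
      (∀ a, FixPt s a ↔ a = abar) ∧
      (∀ (i : N) (s' : (∀ j, j ≠ i → A j) → A i) (a : ∀ k, A k),
        FixPt (Function.update s i s') a → a = abar) ∧
      CSE u s ∧ BestFixPt u s abar := by
  classical
  have hb : ∀ i, ∃ x : A i, x ≠ abar i := fun i =>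
    Fintype.exists_ne_of_one_lt_card (hA i) (abar i)
  obtain ⟨σ, hinj, h1, h2, h3⟩ := exists_sigma hN
  set b : ∀ i, A i := fun i => (hb i).choose with hbdef
  have hbne : ∀ i, b i ≠ abar i := fun i => (hb i).choose_spec
  set s : ∀ i, (∀ j, j ≠ i → A j) → A i :=
    fun i x => if Wmem σ {k | ∃ hk : k ≠ i, x k hk ≠ abar k} i then b i else abar i
    with hsdef
  have hs_eval : ∀ (i : N) (a : ∀ k, A k),
      s i (fun k _ => a k) =
        if Wmem σ ({k | a k ≠ abar k} \ {i}) i then b i else abar i := by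
    intro i a
    have hset : {k | ∃ _ : k ≠ i, a k ≠ abar k} = {k | a k ≠ abar k} \ {i} := by
      ext k
      simp only [Set.mem_setOf_eq, Set.mem_diff, Set.mem_singleton_iff, exists_prop]
      tauto
    rw [hsdef]
    simp only []
    rw [hset]
  have hfix : FixPt s abar := by
    intro i
    rw [hs_eval]
    have : ({k | abar k ≠ abar k} : Set N) \ {i} = ∅ := by
      ext k; simp
    rw [this, if_neg (wmem_empty σ i)]
  have hkey : ∀ (i : N) (s' : (∀ j, j ≠ i → A j) → A i) (a : ∀ k, A k),
      FixPt (Function.update s i s') a → a = abar := by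
    intro i s' a hfa
    by_contra hne
    have hd : ({k | a k ≠ abar k} : Set N).Nonempty := by
      obtain ⟨k, hk⟩ := Function.ne_iff.mp hne
      exact ⟨k, hk⟩
    obtain ⟨j1, j2, hj12, hP1, hP2⟩ := witnesses hinj h1 h2 h3 _ hd
    have hpick : ∃ j, j ≠ i ∧
        ((j ∈ {k | a k ≠ abar k} ∧ ¬ Wmem σ ({k | a k ≠ abar k} \ {j}) j) ∨
         (j ∉ {k | a k ≠ abar k} ∧ Wmem σ {k | a k ≠ abar k} j)) := by
      by_cases h : j1 = i
      · exact ⟨j2, fun hh => hj12 (h ▸ hh ▸ rfl), hP2⟩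
      · exact ⟨j1, h, hP1⟩
    obtain ⟨j, hji, hPj⟩ := hpick
    have hfj := hfa j
    rw [Function.update_of_ne hji] at hfj
    rw [hs_eval] at hfj
    rcases hPj with ⟨hjd, hnw⟩ | ⟨hjd, hw⟩
    · rw [if_neg hnw] at hfj
      exact hjd hfj.symm
    · rw [Set.diff_singleton_eq_self hjd, if_pos hw] at hfj
      have : a j = abar j := not_not.mp hjd
      rw [this] at hfj
      exact hbne j hfj
  have hiff : ∀ a, FixPt s a ↔ a = abar := by
    intro a
    constructor
    · intro hfa
      obtain ⟨i0⟩ := Fintype.card_pos_iff.mp (by omega : 0 < Fintype.card N)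
      have : Function.update s i0 (s i0) = s := Function.update_eq_self i0 s
      exact hkey i0 (s i0) a (by rw [this]; exact hfa)
    · rintro rfl; exact hfix
  have hbest : BestFixPt u s abar :=
    ⟨hfix, fun a' ha' i => by rw [(hiff a').mp ha']⟩
  refine ⟨s, hiff, hkey, ?_, hbest⟩
  intro i s'
  have hUs : U u s i = u i abar := by
    have hex : ∃ a, BestFixPt u s a := ⟨abar, hbest⟩
    rw [U, dif_pos hex]
    have : hex.choose = abar := (hiff _).mp hex.choose_spec.1
    rw [this]
  rw [hUs]
  by_cases hex' : ∃ a, BestFixPt u (Function.update s i s') a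
  · rw [U, dif_pos hex']
    have : hex'.choose = abar := hkey i s' _ hex'.choose_spec.1
    rw [this]
  · rw [U, dif_neg hex']
    exact hu i abar


end CondStrat
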